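/- Let Γ be a bipartite (n+1)-colored graph of order 2p, and ε = (ε_0 ε_1 … ε_n) a cyclic permutation of the colors. Then the quantity Σ_{j∈Z_{n+1}} g_{ε_j,ε_{j+1}} + (1−n)p is an even integer at most 2, where g_{i,j} denotes the number of {i,j}-bicolored cycles of Γ; equivalently, there is a nonnegative integer ρ_ε(Γ) with 2 − 2ρ_ε(Γ) = Σ_j g_{ε_j,ε_{j+1}} + (1−n)p. -/

import Mathlib

/-- An `n`-colored graph: a finite connected `n`-regular multigraph without loops,
equipped with a proper edge-coloring by the `n` colors `Fin n`. -/
structure ColoredGraph (n : ℕ) where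
  V : Type
  E : Type
  [fintypeV : Fintype V]
  [fintypeE : Fintype E]
  ends : E → Sym2 V
  no_loops : ∀ e : E, ¬ (ends e).IsDiag
  color : E → Fin n
  proper : ∀ e₁ e₂ : E, e₁ ≠ e₂ → color e₁ = color e₂ →
      ∀ v : V, ¬ (v ∈ ends e₁ ∧ v ∈ ends e₂)
  regular : ∀ v : V, Set.ncard {e : E | v ∈ ends e} = n
  connected : ∀ v w : V,
      Relation.ReflTransGen (fun a b => ∃ e : E, a ∈ ends e ∧ b ∈ ends e) v w

attribute [instance] ColoredGraph.fintypeV ColoredGraph.fintypeE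

namespace ColoredGraph

variable {n : ℕ} (G : ColoredGraph n)

/-- Reachability using only edges whose color lies in `Δ`. -/
def Reach (Δ : Set (Fin n)) (v w : G.V) : Prop :=
  Relation.EqvGen (fun a b => ∃ e : G.E, G.color e ∈ Δ ∧ a ∈ G.ends e ∧ b ∈ G.ends e) v w

/-- The `Δ`-residue containing `v`. -/
def residue (Δ : Set (Fin n)) (v : G.V) : Set G.V := {u | G.Reach Δ v u}

def residueSetoid (Δ : Set (Fin n)) : Setoid G.V :=
  ⟨G.Reach Δ, Relation.EqvGen.is_equivalence _⟩

/-- number of `Δ`-residues, i.e. connected components of the spanning subgraph `Γ_Δ`. -/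
noncomputable def numResidues (Δ : Set (Fin n)) : ℕ :=
  Nat.card (Quotient (G.residueSetoid Δ))

end ColoredGraph

namespace ColoredGraph

/-- A colored multigraph is bipartite if its vertices admit a proper 2-coloring. -/
def Bipartite {n : ℕ} (G : ColoredGraph n) : Prop :=
  ∃ f : G.V → Bool, ∀ e : G.E, ∀ v ∈ G.ends e, ∀ w ∈ G.ends e, v ≠ w → f v ≠ f w

end ColoredGraph


open Equiv Equiv.Perm

namespace CGAux

variable {X : Type*} [Fintype X]

/-- setoid of being on the same cycle of a permutation -/
def scSetoid (π : Perm X) : Setoid X :=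
  ⟨π.SameCycle, ⟨fun x => SameCycle.refl π x, fun h => h.symm, fun h h' => h.trans h'⟩⟩

/-- number of cycles (orbits, incl. fixed points) of a permutation -/
noncomputable def cyc (π : Perm X) : ℕ := Nat.card (Quotient (scSetoid π))

lemma cyc_one : cyc (1 : Perm X) = Fintype.card X := by
  have e : Quotient (scSetoid (1 : Perm X)) ≃ X := by
    refine ⟨Quotient.lift id ?_, fun x => ⟦x⟧, ?_, ?_⟩
    · rintro a b ⟨i, hi⟩
      simpa using hi
    · intro q; induction q using Quotient.ind; rfl
    · intro x; rfl
  rw [cyc, Nat.card_congr e, Nat.card_eq_fintype_card]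

lemma cyc_le (π : Perm X) : cyc π ≤ Fintype.card X := by
  rw [cyc, ← Nat.card_eq_fintype_card]
  exact Nat.card_le_card_of_surjective (Quotient.mk _) (Quotient.mk_surjective)

lemma eq_one_of_cyc_eq (π : Perm X) (h : cyc π = Fintype.card X) : π = 1 := by
  classical
  have hsurj : Function.Surjective (Quotient.mk (scSetoid π) : X → _) := Quotient.mk_surjective
  have hcard : Fintype.card (Quotient (scSetoid π)) = Fintype.card X := by
    simp only [← Nat.card_eq_fintype_card]; rw [show Nat.card (Quotient (scSetoid π)) = cyc π from rfl, h, Nat.card_eq_fintype_card]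
  have hinj : Function.Injective (Quotient.mk (scSetoid π) : X → _) :=
    ((Fintype.bijective_iff_surjective_and_card _).2 ⟨hsurj, hcard.symm⟩).1
  ext x
  have : π.SameCycle x (π x) := ⟨1, by simp⟩
  have := hinj (Quotient.sound this.symm : (⟦π x⟧ : Quotient (scSetoid π)) = ⟦x⟧)
  simp [this]

end CGAux

namespace CGAux

variable {X : Type*}

lemma rS (s : Setoid X) (x : X) : s.r x x := s.refl x
lemma sS (s : Setoid X) {x y : X} (h : s.r x y) : s.r y x := s.symm h
lemma tS (s : Setoid X) {x y z : X} (h : s.r x y) (h' : s.r y z) : s.r x z := s.trans h h'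

def joinRel (s : Setoid X) (a b : X) (x y : X) : Prop :=
  s.r x y ∨ (s.r x a ∧ s.r b y) ∨ (s.r x b ∧ s.r a y)

/-- the join of a setoid with one extra identification `a ~ b` -/
def joinSetoid (s : Setoid X) (a b : X) (hab : ¬ s.r a b) : Setoid X := by
  refine ⟨joinRel s a b, ?_, ?_, ?_⟩
  · intro x; exact Or.inl (rS s x)
  · rintro x y (h | ⟨h1, h2⟩ | ⟨h1, h2⟩)
    · exact Or.inl (sS s h)
    · exact Or.inr (Or.inr ⟨sS s h2, sS s h1⟩)
    · exact Or.inr (Or.inl ⟨sS s h2, sS s h1⟩)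
  · rintro x y z (h | ⟨h1, h2⟩ | ⟨h1, h2⟩) (h' | ⟨h1', h2'⟩ | ⟨h1', h2'⟩)
    · exact Or.inl (tS s h h')
    · exact Or.inr (Or.inl ⟨tS s h h1', h2'⟩)
    · exact Or.inr (Or.inr ⟨tS s h h1', h2'⟩)
    · exact Or.inr (Or.inl ⟨h1, tS s h2 h'⟩)
    · exact absurd (sS s (tS s h2 h1')) hab
    · exact Or.inl (tS s h1 h2')
    · exact Or.inr (Or.inr ⟨h1, tS s h2 h'⟩)
    · exact Or.inl (tS s h1 h2')
    · exact absurd (tS s h2 h1') hab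

lemma joinSetoid_r (s : Setoid X) (a b : X) (hab : ¬ s.r a b) :
    (joinSetoid s a b hab).r = joinRel s a b := rfl

lemma card_joinSetoid [Fintype X] (s : Setoid X) (a b : X) (hab : ¬ s.r a b) :
    Nat.card (Quotient (joinSetoid s a b hab)) + 1 = Nat.card (Quotient s) := by
  classical
  set s' := joinSetoid s a b hab with hs'
  have hab' : ¬ s.r b a := fun q => hab (sS s q)
  have wdf : ∀ x y, s'.r x y →
      (if s.r b x then (⟦a⟧ : Quotient s) else ⟦x⟧) = (if s.r b y then (⟦a⟧ : Quotient s) else ⟦y⟧) := by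
    rintro x y (h | ⟨h1, h2⟩ | ⟨h1, h2⟩)
    · by_cases hbx : s.r b x
      · rw [if_pos hbx, if_pos (tS s hbx h)]
      · rw [if_neg hbx, if_neg (fun q => hbx (tS s q (sS s h)))]
        exact Quotient.sound h
    · rw [if_neg (fun q => hab' (tS s q h1)), if_pos h2]
      exact Quotient.sound h1
    · rw [if_pos (sS s h1), if_neg (fun q => hab' (tS s q (sS s h2)))]
      exact Quotient.sound h2
  let F : Quotient s' ⊕ Unit → Quotient s := fun q =>
    Sum.elim (Quotient.lift (fun x => if s.r b x then (⟦a⟧ : Quotient s) else ⟦x⟧) wdf) (fun _ => ⟦b⟧) q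
  have wdg : ∀ x y, s.r x y →
      (if s.r b x then (Sum.inr () : Quotient s' ⊕ Unit) else Sum.inl ⟦x⟧)
        = (if s.r b y then (Sum.inr () : Quotient s' ⊕ Unit) else Sum.inl ⟦y⟧) := by
    intro x y h
    by_cases hbx : s.r b x
    · rw [if_pos hbx, if_pos (tS s hbx h)]
    · rw [if_neg hbx, if_neg (fun q => hbx (tS s q (sS s h)))]
      exact congrArg _ (Quotient.sound (Or.inl h))
  let Gm : Quotient s → Quotient s' ⊕ Unit :=
    Quotient.lift (fun x => if s.r b x then (Sum.inr () : Quotient s' ⊕ Unit) else Sum.inl ⟦x⟧) wdg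
  have e : Quotient s' ⊕ Unit ≃ Quotient s := by
    refine ⟨F, Gm, ?_, ?_⟩
    · rintro (q | u)
      · induction q using Quotient.ind with
        | _ x =>
          show Gm (if s.r b x then (⟦a⟧ : Quotient s) else ⟦x⟧) = _
          by_cases hbx : s.r b x
          · rw [if_pos hbx]
            show (if s.r b a then (Sum.inr () : Quotient s' ⊕ Unit) else Sum.inl ⟦a⟧) = _
            rw [if_neg hab']
            exact congrArg _ (Quotient.sound (Or.inr (Or.inl ⟨rS s a, hbx⟩)))
          · rw [if_neg hbx]
            show (if s.r b x then (Sum.inr () : Quotient s' ⊕ Unit) else Sum.inl ⟦x⟧) = _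
            rw [if_neg hbx]
      · show Gm ⟦b⟧ = Sum.inr u
        show (if s.r b b then (Sum.inr () : Quotient s' ⊕ Unit) else Sum.inl ⟦b⟧) = _
        rw [if_pos (rS s b)]
    · intro q
      induction q using Quotient.ind with
      | _ x =>
        show F (if s.r b x then (Sum.inr () : Quotient s' ⊕ Unit) else Sum.inl ⟦x⟧) = ⟦x⟧
        by_cases hbx : s.r b x
        · rw [if_pos hbx]
          exact Quotient.sound hbx
        · rw [if_neg hbx]
          show (if s.r b x then (⟦a⟧ : Quotient s) else ⟦x⟧) = ⟦x⟧
          rw [if_neg hbx]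
  have h2 := Nat.card_congr e
  rw [Nat.card_sum] at h2
  simpa using h2

end CGAux

namespace CGAux

variable {X : Type*} [Fintype X] [DecidableEq X]

lemma sc_apply (π : Perm X) (x : X) : π.SameCycle x (π x) := ⟨1, by simp⟩

lemma sc_pow (π : Perm X) (x : X) (i : ℕ) : π.SameCycle x ((π ^ i) x) :=
  ⟨(i : ℤ), by rw [zpow_natCast]⟩

lemma sc_of_pow_eq (π : Perm X) {x y : X} {i : ℕ} (h : (π ^ i) x = y) : π.SameCycle x y :=
  h ▸ sc_pow π x i

/-- K1 : if a,b are on different cycles of π then they are on the same cycle of π·(a b) -/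
lemma K1 (π : Perm X) {a b : X} (hab : ¬ π.SameCycle a b) :
    (π * Equiv.swap a b).SameCycle a b := by
  set σ := π * Equiv.swap a b with hσ
  by_contra h
  have hne : a ≠ b := fun q => hab (q ▸ SameCycle.refl π a)
  have hσa : σ a = π b := by simp [hσ, Equiv.Perm.mul_apply]
  have key : ∀ i : ℕ, 1 ≤ i → σ.SameCycle a ((π ^ i) b) := by
    intro i
    induction i with
    | zero => omega
    | succ i ih =>
      intro _
      rcases Nat.eq_zero_or_pos i with h0 | hi
      · subst h0
        have : (π ^ 1) b = σ a := by simpa using hσa.symm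
        rw [this]
        exact sc_apply σ a
      · have hx := ih hi
        have hxa : (π ^ i) b ≠ a := by
          intro hq
          exact hab (SameCycle.symm (sc_of_pow_eq π hq))
        have hxb : (π ^ i) b ≠ b := by
          intro hq
          exact h (hq ▸ hx)
        have hstep : σ ((π ^ i) b) = (π ^ (i+1)) b := by
          rw [pow_succ']
          simp only [hσ, Equiv.Perm.mul_apply]
          rw [Equiv.swap_apply_of_ne_of_ne hxa hxb]
        exact hx.trans (hstep ▸ sc_apply σ ((π ^ i) b))
  have hord : (π ^ orderOf π) b = b := by rw [pow_orderOf_eq_one]; rfl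
  exact h (hord ▸ key (orderOf π) (orderOf_pos π))

/-- K5 : cycles only merge -/
lemma K5 (π : Perm X) {a b : X} (hab : ¬ π.SameCycle a b) {x y : X}
    (h : π.SameCycle x y) : (π * Equiv.swap a b).SameCycle x y := by
  classical
  set σ := π * Equiv.swap a b with hσ
  have hK1 : σ.SameCycle a b := K1 π hab
  have step : ∀ z : X, σ.SameCycle z (π z) := by
    intro z
    by_cases hza : z = a
    · rw [hza]
      have : π a = σ b := by simp [hσ, Equiv.Perm.mul_apply]
      rw [this]
      exact hK1.trans (sc_apply σ b)
    · by_cases hzb : z = b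
      · rw [hzb]
        have : π b = σ a := by simp [hσ, Equiv.Perm.mul_apply]
        rw [this]
        exact hK1.symm.trans (sc_apply σ a)
      · have : π z = σ z := by
          simp only [hσ, Equiv.Perm.mul_apply]
          rw [Equiv.swap_apply_of_ne_of_ne hza hzb]
        rw [this]
        exact sc_apply σ z
  obtain ⟨i, -, hi⟩ := h.exists_pow_eq'
  subst hi
  clear h
  induction i with
  | zero => exact SameCycle.refl σ x
  | succ i ih =>
    have : (π ^ (i+1)) x = π ((π ^ i) x) := by rw [pow_succ']; rfl
    rw [this]
    exact ih.trans (step ((π ^ i) x))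

lemma scSetoid_mul_swap (π : Perm X) {a b : X} (hab : ¬ π.SameCycle a b) :
    scSetoid (π * Equiv.swap a b) = joinSetoid (scSetoid π) a b hab := by
  set σ := π * Equiv.swap a b with hσ
  have hK1 : σ.SameCycle a b := K1 π hab
  apply Setoid.ext
  intro x y
  constructor
  · intro h
    obtain ⟨i, -, hi⟩ := h.exists_pow_eq'
    subst hi
    clear h
    have single : ∀ z : X, joinRel (scSetoid π) a b z (σ z) := by
      intro z
      by_cases hza : z = a
      · rw [hza]
        have : σ a = π b := by simp [hσ, Equiv.Perm.mul_apply]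
        rw [this]
        exact Or.inr (Or.inl ⟨SameCycle.refl π a, sc_apply π b⟩)
      · by_cases hzb : z = b
        · rw [hzb]
          have : σ b = π a := by simp [hσ, Equiv.Perm.mul_apply]
          rw [this]
          exact Or.inr (Or.inr ⟨SameCycle.refl π b, sc_apply π a⟩)
        · have : σ z = π z := by
            simp only [hσ, Equiv.Perm.mul_apply]
            rw [Equiv.swap_apply_of_ne_of_ne hza hzb]
          rw [this]
          exact Or.inl (sc_apply π z)
    induction i with
    | zero => exact Or.inl (SameCycle.refl π x)
    | succ i ih =>
      have hstep : (σ ^ (i+1)) x = σ ((σ ^ i) x) := by rw [pow_succ']; rfl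
      rw [hstep]
      exact tS (joinSetoid (scSetoid π) a b hab) ih (single ((σ ^ i) x))
  · rintro (h | ⟨h1, h2⟩ | ⟨h1, h2⟩)
    · exact K5 π hab h
    · exact ((K5 π hab h1).trans hK1).trans (K5 π hab h2)
    · exact ((K5 π hab h1).trans hK1.symm).trans (K5 π hab h2)

lemma cyc_mul_swap_of_not (π : Perm X) {a b : X} (hab : ¬ π.SameCycle a b) :
    cyc (π * Equiv.swap a b) + 1 = cyc π := by
  show Nat.card (Quotient (scSetoid (π * Equiv.swap a b))) + 1 = _
  rw [scSetoid_mul_swap π hab]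
  exact card_joinSetoid (scSetoid π) a b hab

end CGAux

namespace CGAux

variable {X : Type*} [Fintype X] [DecidableEq X]

/-- K2 : if a,b are on the same cycle of π then π·(a b) splits them apart -/
lemma K2 (π : Perm X) {a b : X} (hne : a ≠ b) (hsc : π.SameCycle a b) :
    ¬ (π * Equiv.swap a b).SameCycle a b := by
  classical
  set σ := π * Equiv.swap a b with hσ
  obtain ⟨k0, -, hk0⟩ := hsc.exists_pow_eq'
  have hex : ∃ k, (π ^ k) a = b := ⟨k0, hk0⟩
  set k := Nat.find hex with hkdef
  have hk : (π ^ k) a = b := Nat.find_spec hex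
  have hkmin : ∀ j < k, (π ^ j) a ≠ b := fun j hj => Nat.find_min hex hj
  have hmex : ∃ m, 0 < m ∧ (π ^ m) a = a :=
    ⟨orderOf π, orderOf_pos π, by rw [pow_orderOf_eq_one]; rfl⟩
  set m := Nat.find hmex with hmdef
  obtain ⟨hm0, hm⟩ : 0 < m ∧ (π ^ m) a = a := Nat.find_spec hmex
  have hmmin : ∀ j, 0 < j → j < m → (π ^ j) a ≠ a := fun j h1 h2 h3 =>
    (Nat.find_min hmex h2) ⟨h1, h3⟩
  have hkpos : 0 < k := by
    rcases Nat.eq_zero_or_pos k with h0 | h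
    · exfalso; apply hne; rw [← hk, h0, pow_zero]; rfl
    · exact h
  have hkm : k < m := by
    by_contra hcon
    push_neg at hcon
    have : (π ^ (k - m)) a = b := by
      have : (π ^ k) a = (π ^ (k - m)) ((π ^ m) a) := by
        rw [← Equiv.Perm.mul_apply, ← pow_add]
        congr 2
        omega
      rw [hm] at this
      rw [← this, hk]
    exact hkmin (k - m) (by omega) this
  have claim : ∀ i, 1 ≤ i → i ≤ m - k → (σ ^ i) a = (π ^ (k + i)) a := by
    intro i
    induction i with
    | zero => omega
    | succ i ih =>
      intro _ hle
      rcases Nat.eq_zero_or_pos i with h0 | hi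
      · subst h0
        have : σ a = (π ^ (k + 1)) a := by
          simp only [hσ, Equiv.Perm.mul_apply, Equiv.swap_apply_left]
          rw [pow_succ', Equiv.Perm.mul_apply, hk]
        simpa using this
      · have hx := ih hi (by omega)
        have hxa : (π ^ (k + i)) a ≠ a := hmmin (k + i) (by omega) (by omega)
        have hxb : (π ^ (k + i)) a ≠ b := by
          intro hq
          have hcancel : (π ^ i) a = a := by
            have h1 : (π ^ k) ((π ^ i) a) = (π ^ k) a := by
              rw [← Equiv.Perm.mul_apply, ← pow_add, hk, ← hq]
            exact (π ^ k).injective h1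
          exact hmmin i hi (by omega) hcancel
        have : (σ ^ (i + 1)) a = σ ((σ ^ i) a) := by rw [pow_succ']; rfl
        rw [this, hx]
        simp only [hσ, Equiv.Perm.mul_apply]
        rw [Equiv.swap_apply_of_ne_of_ne hxa hxb, ← Equiv.Perm.mul_apply, ← pow_succ']
        congr 1
  have hfix : (σ ^ (m - k)) a = a := by
    have := claim (m - k) (by omega) le_rfl
    rw [this, show k + (m - k) = m by omega, hm]
  intro hcon
  obtain ⟨j, -, hj⟩ := hcon.exists_pow_eq'
  have hperiod : ∀ q, (σ ^ ((m - k) * q)) a = a := by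
    intro q
    induction q with
    | zero => simp
    | succ q ih =>
      rw [Nat.mul_succ, pow_add, Equiv.Perm.mul_apply, hfix, ih]
  have hr : (σ ^ (j % (m - k))) a = b := by
    conv_rhs => rw [← hj]
    have : (σ ^ j) a = (σ ^ (j % (m - k))) ((σ ^ ((m - k) * (j / (m - k)))) a) := by
      rw [← Equiv.Perm.mul_apply, ← pow_add]
      congr 2
      exact (Nat.mod_add_div j (m - k)).symm
    rw [this, hperiod]
  set r := j % (m - k) with hrdef
  have hrlt : r < m - k := Nat.mod_lt _ (by omega)
  have hrpos : 0 < r := by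
    rcases Nat.eq_zero_or_pos r with h0 | h
    · exfalso; apply hne; rw [← hr, h0, pow_zero]; rfl
    · exact h
  have := claim r hrpos (by omega)
  rw [hr] at this
  have hcancel : (π ^ r) a = a := by
    have h1 : (π ^ k) ((π ^ r) a) = (π ^ k) a := by
      rw [← Equiv.Perm.mul_apply, ← pow_add, hk, this]
    exact (π ^ k).injective h1
  exact hmmin r hrpos (by omega) hcancel

lemma cyc_mul_swap_of_sc (π : Perm X) {a b : X} (hne : a ≠ b) (hsc : π.SameCycle a b) :
    cyc (π * Equiv.swap a b) = cyc π + 1 := by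
  have h2 := K2 π hne hsc
  have h3 := cyc_mul_swap_of_not (π * Equiv.swap a b) h2
  rw [mul_assoc, Equiv.swap_mul_self, mul_one] at h3
  omega

lemma cyc_mul_swap_le (π : Perm X) {a b : X} (hne : a ≠ b) :
    cyc (π * Equiv.swap a b) ≤ cyc π + 1 := by
  by_cases hsc : π.SameCycle a b
  · rw [cyc_mul_swap_of_sc π hne hsc]
  · have := cyc_mul_swap_of_not π hsc
    omega

end CGAux

namespace CGAux

variable {X : Type*} [Fintype X] [DecidableEq X]

def orbSetoid (H : Subgroup (Perm X)) : Setoid X := by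
  refine ⟨fun x y => ∃ g ∈ H, g x = y, fun x => ⟨1, H.one_mem, rfl⟩, ?_, ?_⟩
  · rintro x y ⟨g, hg, rfl⟩
    exact ⟨g⁻¹, H.inv_mem hg, g.symm_apply_apply x⟩
  · rintro x y z ⟨g, hg, rfl⟩ ⟨g', hg', rfl⟩
    exact ⟨g' * g, H.mul_mem hg' hg, rfl⟩

noncomputable def nOrb (H : Subgroup (Perm X)) : ℕ := Nat.card (Quotient (orbSetoid H))

lemma orb_of_sameCycle {H : Subgroup (Perm X)} {π : Perm X} (hπ : π ∈ H) {x y : X}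
    (h : π.SameCycle x y) : (orbSetoid H).r x y := by
  obtain ⟨i, hi⟩ := h
  exact ⟨π ^ i, H.zpow_mem hπ i, hi⟩

lemma nOrb_bot : nOrb (⊥ : Subgroup (Perm X)) = Fintype.card X := by
  have h : orbSetoid (⊥ : Subgroup (Perm X)) = scSetoid (1 : Perm X) := by
    apply Setoid.ext
    intro x y
    constructor
    · rintro ⟨g, hg, rfl⟩
      rw [Subgroup.mem_bot] at hg
      subst hg
      exact SameCycle.refl 1 x
    · rintro ⟨i, hi⟩
      refine ⟨1, Subgroup.one_mem _, ?_⟩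
      simpa using hi
  rw [nOrb, h]
  exact cyc_one

lemma orbSetoid_mono {H K : Subgroup (Perm X)} (h : H ≤ K) {x y : X}
    (hr : (orbSetoid H).r x y) : (orbSetoid K).r x y := by
  obtain ⟨g, hg, rfl⟩ := hr
  exact ⟨g, h hg, rfl⟩

lemma orbSetoid_insert_of_rel (S : Set (Perm X)) {a b : X}
    (hab : (orbSetoid (Subgroup.closure S)).r a b) :
    orbSetoid (Subgroup.closure (insert (Equiv.swap a b) S)) = orbSetoid (Subgroup.closure S) := by
  apply Setoid.ext
  intro x y
  constructor
  · rintro ⟨g, hg, rfl⟩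
    have key : ∀ x, (orbSetoid (Subgroup.closure S)).r x (g x) := by
      refine Subgroup.closure_induction (p := fun g _ => ∀ x, (orbSetoid (Subgroup.closure S)).r x (g x))
        ?_ ?_ ?_ ?_ hg
      · rintro τ hτ x
        rcases hτ with hτ | hτ
        · subst hτ
          by_cases hxa : x = a
          · rw [hxa, Equiv.swap_apply_left]
            exact hab
          · by_cases hxb : x = b
            · rw [hxb, Equiv.swap_apply_right]
              exact sS _ hab
            · rw [Equiv.swap_apply_of_ne_of_ne hxa hxb]
        · exact ⟨τ, Subgroup.subset_closure hτ, rfl⟩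
      · intro x
        exact rS _ x
      · intro g g' _ _ hgp hgp' x
        exact tS _ (hgp' x) (hgp (g' x))
      · intro g _ hgp x
        have h2 := hgp (g⁻¹ x)
        rw [← Equiv.Perm.mul_apply, mul_inv_cancel, Equiv.Perm.one_apply] at h2
        exact sS _ h2
    exact key x
  · exact orbSetoid_mono (Subgroup.closure_mono (Set.subset_insert _ _))

lemma orbSetoid_insert_of_not_rel (S : Set (Perm X)) {a b : X}
    (hab : ¬ (orbSetoid (Subgroup.closure S)).r a b) :
    orbSetoid (Subgroup.closure (insert (Equiv.swap a b) S))
      = joinSetoid (orbSetoid (Subgroup.closure S)) a b hab := by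
  set s := orbSetoid (Subgroup.closure S) with hs
  set s' := joinSetoid s a b hab with hs'
  apply Setoid.ext
  intro x y
  constructor
  · rintro ⟨g, hg, rfl⟩
    have key : ∀ x, s'.r x (g x) := by
      refine Subgroup.closure_induction (p := fun g _ => ∀ x, s'.r x (g x)) ?_ ?_ ?_ ?_ hg
      · rintro τ hτ x
        rcases hτ with hτ | hτ
        · subst hτ
          by_cases hxa : x = a
          · rw [hxa, Equiv.swap_apply_left]
            exact Or.inr (Or.inl ⟨rS s a, rS s b⟩)
          · by_cases hxb : x = b
            · rw [hxb, Equiv.swap_apply_right]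
              exact Or.inr (Or.inr ⟨rS s b, rS s a⟩)
            · rw [Equiv.swap_apply_of_ne_of_ne hxa hxb]
        · exact Or.inl ⟨τ, Subgroup.subset_closure hτ, rfl⟩
      · intro x
        exact rS s' x
      · intro g g' _ _ hgp hgp' x
        exact tS s' (hgp' x) (hgp (g' x))
      · intro g _ hgp x
        have := hgp (g⁻¹ x)
        rw [← Equiv.Perm.mul_apply, mul_inv_cancel, Equiv.Perm.one_apply] at this
        exact sS s' this
    exact key x
  · have hmem : ∀ {u v : X}, s.r u v →
        (orbSetoid (Subgroup.closure (insert (Equiv.swap a b) S))).r u v :=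
      fun h => orbSetoid_mono (Subgroup.closure_mono (Set.subset_insert _ _)) h
    have hab' : (orbSetoid (Subgroup.closure (insert (Equiv.swap a b) S))).r a b :=
      ⟨Equiv.swap a b, Subgroup.subset_closure (Set.mem_insert _ _), Equiv.swap_apply_left a b⟩
    rintro (h | ⟨h1, h2⟩ | ⟨h1, h2⟩)
    · exact hmem h
    · exact tS _ (tS _ (hmem h1) hab') (hmem h2)
    · exact tS _ (tS _ (hmem h1) (sS _ hab')) (hmem h2)

lemma nOrb_insert_of_not_rel (S : Set (Perm X)) {a b : X}
    (hab : ¬ (orbSetoid (Subgroup.closure S)).r a b) :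
    nOrb (Subgroup.closure (insert (Equiv.swap a b) S)) + 1 = nOrb (Subgroup.closure S) := by
  rw [nOrb, orbSetoid_insert_of_not_rel S hab]
  exact card_joinSetoid _ a b hab

end CGAux

namespace CGAux

variable {X : Type*} [Fintype X] [DecidableEq X]

lemma swap_list_invariant (l : List (Perm X))
    (hl : ∀ g ∈ l, ∃ a b, a ≠ b ∧ g = Equiv.swap a b) :
    cyc l.prod + 2 * Fintype.card X ≤
      Fintype.card X + l.length + 2 * nOrb (Subgroup.closure {g | g ∈ l}) := by
  induction l using List.reverseRecOn with
  | nil =>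
    have h1 : ({g | g ∈ ([] : List (Perm X))} : Set (Perm X)) = ∅ := by
      ext g; simp
    rw [List.prod_nil, cyc_one, h1, Subgroup.closure_empty, nOrb_bot]
    omega
  | append_singleton l τ ih =>
    obtain ⟨a, b, hne, rfl⟩ := hl τ (by simp)
    have hl' : ∀ g ∈ l, ∃ a b, a ≠ b ∧ g = Equiv.swap a b := fun g hg => hl g (by simp [hg])
    have ihl := ih hl'
    have hset : ({g | g ∈ l ++ [Equiv.swap a b]} : Set (Perm X))
        = insert (Equiv.swap a b) {g | g ∈ l} := by
      ext g
      simp [List.mem_append, or_comm]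
    have hprod : (l ++ [Equiv.swap a b]).prod = l.prod * Equiv.swap a b := by
      rw [List.prod_append, List.prod_singleton]
    rw [hset, hprod, List.length_append]
    by_cases hab : (orbSetoid (Subgroup.closure {g | g ∈ l})).r a b
    · have hOrb : nOrb (Subgroup.closure (insert (Equiv.swap a b) {g | g ∈ l}))
          = nOrb (Subgroup.closure {g | g ∈ l}) := by
        rw [nOrb, orbSetoid_insert_of_rel _ hab]
        rfl
      have hcyc := cyc_mul_swap_le l.prod hne
      rw [hOrb]
      simp only [List.length_singleton]
      omega
    · have hnsc : ¬ l.prod.SameCycle a b := by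
        intro hsc
        have hmem : l.prod ∈ Subgroup.closure {g | g ∈ l} :=
          list_prod_mem (fun g hg => Subgroup.subset_closure hg)
        exact hab (orb_of_sameCycle hmem hsc)
      have hcyc := cyc_mul_swap_of_not l.prod hnsc
      have hOrb := nOrb_insert_of_not_rel {g | g ∈ l} hab
      simp only [List.length_singleton]
      omega

lemma exists_swap_decomp (π : Perm X) : ∃ l : List (Perm X),
    (∀ g ∈ l, ∃ a b, a ≠ b ∧ g = Equiv.swap a b) ∧ l.prod = π ∧
      l.length + cyc π = Fintype.card X := by
  generalize hd : Fintype.card X - cyc π = d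
  induction d generalizing π with
  | zero =>
    have hle := cyc_le π
    have hcyc : cyc π = Fintype.card X := by omega
    have : π = 1 := eq_one_of_cyc_eq π hcyc
    subst this
    exact ⟨[], by simp, by simp, by rw [cyc_one] at hcyc ⊢; simp⟩
  | succ d ih =>
    have hlt : cyc π < Fintype.card X := by have := cyc_le π; omega
    have hne1 : π ≠ 1 := by
      intro h
      rw [h, cyc_one] at hlt
      omega
    have hex : ∃ a, π a ≠ a := by
      by_contra hcon
      push_neg at hcon
      exact hne1 (Equiv.ext fun x => by simpa using hcon x)
    obtain ⟨a, ha⟩ := hex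
    have hne : a ≠ π a := fun q => ha q.symm
    have hsc : π.SameCycle a (π a) := sc_apply π a
    have hcut := cyc_mul_swap_of_sc π hne hsc
    have hle2 := cyc_le (π * Equiv.swap a (π a))
    obtain ⟨l, hlsw, hlprod, hllen⟩ := ih (π * Equiv.swap a (π a)) (by omega)
    refine ⟨l ++ [Equiv.swap a (π a)], ?_, ?_, ?_⟩
    · intro g hg
      rcases List.mem_append.mp hg with h | h
      · exact hlsw g h
      · exact ⟨a, π a, hne, by simpa using h⟩
    · rw [List.prod_append, List.prod_singleton, hlprod, mul_assoc, Equiv.swap_mul_self, mul_one]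
    · rw [List.length_append]
      simp only [List.length_singleton]
      omega

lemma sum_map_cast (L : List (Perm X)) (f : Perm X → ℕ) :
    ((L.map f).sum : ℤ) = (L.map fun g => (f g : ℤ)).sum := by
  induction L with
  | nil => simp
  | cons g L ih => simp [ih]

lemma sum_map_add (L : List (Perm X)) (f g : Perm X → ℕ) :
    (L.map f).sum + (L.map g).sum = (L.map fun x => f x + g x).sum := by
  induction L with
  | nil => simp
  | cons x L ih => simp only [List.map_cons, List.sum_cons]; omega

theorem constellation (L : List (Perm X)) (hprod : L.prod = 1)
    (htrans : ∀ x y : X, (orbSetoid (Subgroup.closure {g | g ∈ L})).r x y)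
    (hpos : 0 < Fintype.card X) :
    ∃ ρ : ℕ, (L.map fun g => (cyc g : ℤ)).sum
        + (2 - (L.length : ℤ)) * Fintype.card X = 2 - 2 * (ρ : ℤ) := by
  classical
  set N := Fintype.card X with hN
  let w : Perm X → List (Perm X) := fun g => (exists_swap_decomp g).choose
  have hw : ∀ g : Perm X, (∀ τ ∈ w g, ∃ a b, a ≠ b ∧ τ = Equiv.swap a b) ∧
      (w g).prod = g ∧ (w g).length + cyc g = N := fun g => (exists_swap_decomp g).choose_spec
  set M := (L.map w).flatten with hM
  have hMsw : ∀ τ ∈ M, ∃ a b, a ≠ b ∧ τ = Equiv.swap a b := by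
    intro τ hτ
    rw [hM, List.mem_flatten] at hτ
    obtain ⟨lg, hlg, hτ2⟩ := hτ
    obtain ⟨g, hgL, rfl⟩ := List.mem_map.mp hlg
    exact (hw g).1 τ hτ2
  have hMprod : M.prod = 1 := by
    rw [hM, List.prod_flatten, List.map_map]
    have : L.map (List.prod ∘ w) = L.map id := List.map_congr_left fun g _ => (hw g).2.1
    rw [this, List.map_id, hprod]
  have hMlen : M.length = (L.map fun g => (w g).length).sum := by
    rw [hM, List.length_flatten, List.map_map]
    rfl
  have hsum : (L.map fun g => cyc g).sum + M.length = L.length * N := by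
    rw [hMlen, sum_map_add]
    have : (L.map fun x => cyc x + (w x).length) = L.map fun _ => N :=
      List.map_congr_left fun g _ => by have := (hw g).2.2; omega
    rw [this, List.map_const', List.sum_replicate, smul_eq_mul]
  -- transitivity for M
  have hle : Subgroup.closure {g | g ∈ L} ≤ Subgroup.closure {g | g ∈ M} := by
    rw [Subgroup.closure_le]
    intro g hg
    have : g = (w g).prod := ((hw g).2.1).symm
    rw [SetLike.mem_coe, this]
    apply list_prod_mem
    intro τ hτ
    apply Subgroup.subset_closure
    exact List.mem_flatten.mpr ⟨w g, List.mem_map.mpr ⟨g, hg, rfl⟩, hτ⟩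
  have hMorb : nOrb (Subgroup.closure {g | g ∈ M}) = 1 := by
    rw [nOrb, Nat.card_eq_one_iff_unique]
    constructor
    · constructor
      intro q q'
      induction q using Quotient.ind with
      | _ x =>
        induction q' using Quotient.ind with
        | _ y => exact Quotient.sound (orbSetoid_mono hle (htrans x y))
    · have : Nonempty X := Fintype.card_pos_iff.mp hpos
      exact Nonempty.map (Quotient.mk _) this
  have hinv := swap_list_invariant M hMsw
  rw [hMprod, cyc_one, hMorb] at hinv
  -- parity of M.length
  have hsign : Equiv.Perm.sign M.prod = (-1 : ℤˣ) ^ M.length := by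
    apply Equiv.Perm.sign_prod_list_swap
    intro τ hτ
    obtain ⟨a, b, hab, rfl⟩ := hMsw τ hτ
    exact ⟨a, b, hab, rfl⟩
  rw [hMprod, Equiv.Perm.sign_one] at hsign
  have heven : Even M.length := by
    have h2 : ((-1 : ℤˣ)) ^ M.length = 1 := hsign.symm
    exact (neg_one_pow_eq_one_iff_even (by decide)).mp h2
  obtain ⟨c, hc⟩ := heven
  have hge : 2 * N ≤ M.length + 2 := by omega
  refine ⟨c + 1 - N, ?_⟩
  have hcast : ((L.map fun g => cyc g).sum : ℤ) = (L.map fun g => (cyc g : ℤ)).sum :=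
    sum_map_cast L _
  rw [← hcast]
  have h1 : ((L.map fun g => cyc g).sum : ℤ) + (M.length : ℤ) = (L.length : ℤ) * (N : ℤ) := by
    exact_mod_cast hsum
  have hge2 : N ≤ c + 1 := by omega
  have hρ : ((c + 1 - N : ℕ) : ℤ) = (c : ℤ) + 1 - N := by omega
  have hmc : (M.length : ℤ) = (c : ℤ) + (c : ℤ) := by exact_mod_cast hc
  have hexp : (2 - (L.length : ℤ)) * (N : ℤ) = 2 * N - (L.length : ℤ) * N := by ring
  rw [hexp, hρ]
  linarith [h1]

end CGAux


namespace CGAux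

open ColoredGraph

variable {m : ℕ} (G : ColoredGraph m)

lemma exists_unique_edge (v : G.V) (c : Fin m) :
    ∃! e : G.E, v ∈ G.ends e ∧ G.color e = c := by
  classical
  set S : Set G.E := {e | v ∈ G.ends e} with hS
  have hcard : Nat.card S = m := by
    rw [Nat.card_coe_set_eq]
    exact G.regular v
  let F : S → Fin m := fun e => G.color e.val
  have hinj : Function.Injective F := by
    rintro ⟨e₁, he₁⟩ ⟨e₂, he₂⟩ h
    by_contra hne
    have hne' : e₁ ≠ e₂ := fun q => hne (Subtype.ext q)
    exact G.proper e₁ e₂ hne' h v ⟨he₁, he₂⟩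
  have hbij : Function.Bijective F := by
    rw [Nat.bijective_iff_injective_and_card]
    exact ⟨hinj, by rw [hcard, Nat.card_eq_fintype_card, Fintype.card_fin]⟩
  obtain ⟨⟨e, he⟩, hFe⟩ := hbij.surjective c
  refine ⟨e, ⟨he, hFe⟩, ?_⟩
  rintro e' ⟨he', hc'⟩
  have : F ⟨e', he'⟩ = F ⟨e, he⟩ := by
    show G.color e' = G.color e
    rw [hc']
    exact hFe.symm
  exact congrArg Subtype.val (hinj this)

/-- `w` is the `c`-colored partner of `v` -/
def partnerP (c : Fin m) (v w : G.V) : Prop :=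
  ∃ e : G.E, G.color e = c ∧ G.ends e = s(v, w)

lemma partner_exu (c : Fin m) (v : G.V) : ∃! w : G.V, partnerP G c v w := by
  obtain ⟨e, ⟨hve, hce⟩, hu⟩ := exists_unique_edge G v c
  obtain ⟨w, hw⟩ := Sym2.mem_iff_exists.mp hve
  refine ⟨w, ⟨e, hce, hw⟩, ?_⟩
  rintro w' ⟨e', hce', hw'⟩
  have he' : e' = e := hu e' ⟨hw' ▸ Sym2.mem_mk_left v w', hce'⟩
  rw [he', hw] at hw'
  exact Sym2.congr_right.mp hw'.symm

noncomputable def pfun (c : Fin m) : G.V → G.V := fun v => (partner_exu G c v).exists.choose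

lemma pfun_spec (c : Fin m) (v : G.V) : partnerP G c v (pfun G c v) :=
  (partner_exu G c v).exists.choose_spec

lemma pfun_eq (c : Fin m) {v w : G.V} (h : partnerP G c v w) : pfun G c v = w :=
  ((partner_exu G c v).unique (pfun_spec G c v) h)

lemma partnerP_symm {c : Fin m} {v w : G.V} (h : partnerP G c v w) : partnerP G c w v := by
  obtain ⟨e, hc, he⟩ := h
  exact ⟨e, hc, by rw [he, Sym2.eq_swap]⟩

lemma pfun_invol (c : Fin m) : Function.Involutive (pfun G c) := by
  intro v
  exact pfun_eq G c (partnerP_symm G (pfun_spec G c v))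

/-- the color-c involution permutation -/
noncomputable def pperm (c : Fin m) : Equiv.Perm G.V := (pfun_invol G c).toPerm

lemma pperm_apply (c : Fin m) (v : G.V) : pperm G c v = pfun G c v := rfl

lemma pperm_partner (c : Fin m) (v : G.V) : partnerP G c v (pperm G c v) := pfun_spec G c v

lemma pperm_mul_self (c : Fin m) : pperm G c * pperm G c = 1 := by
  ext v
  exact pfun_invol G c v

lemma pperm_ne (c : Fin m) (v : G.V) : pperm G c v ≠ v := by
  intro h
  obtain ⟨e, hc, he⟩ := pperm_partner G c v
  rw [h] at he
  exact G.no_loops e (he ▸ (Sym2.mk_isDiag_iff.mpr rfl))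

lemma ends_eq (e : G.E) {v : G.V} (hv : v ∈ G.ends e) :
    G.ends e = s(v, pperm G (G.color e) v) := by
  obtain ⟨w, hw⟩ := Sym2.mem_iff_exists.mp hv
  have : partnerP G (G.color e) v w := ⟨e, rfl, hw⟩
  rw [hw, pperm_apply G, pfun_eq G _ this]

lemma edge_other {e : G.E} {v u : G.V} (hv : v ∈ G.ends e) (hu : u ∈ G.ends e) :
    u = v ∨ u = pperm G (G.color e) v := by
  rw [ends_eq G e hv] at hu
  rcases Sym2.mem_iff.mp hu with h | h
  · exact Or.inl h
  · exact Or.inr h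

end CGAux

namespace CGAux

open ColoredGraph

variable {m : ℕ} (G : ColoredGraph m)

lemma pperm_inv (c : Fin m) : (pperm G c)⁻¹ = pperm G c :=
  inv_eq_of_mul_eq_one_left (pperm_mul_self G c)

lemma pperm_invol_apply (c : Fin m) (v : G.V) : pperm G c (pperm G c v) = v :=
  pfun_invol G c v

/-- the two-color permutation -/
noncomputable def dd (a b : Fin m) : Equiv.Perm G.V := pperm G a * pperm G b

lemma dd_inv (a b : Fin m) : (dd G a b)⁻¹ = pperm G b * pperm G a := by
  rw [dd, mul_inv_rev, pperm_inv, pperm_inv]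

lemma dd_conj (a b : Fin m) : pperm G a * dd G a b * (pperm G a)⁻¹ = (dd G a b)⁻¹ := by
  rw [dd_inv, pperm_inv, dd, ← mul_assoc, pperm_mul_self, one_mul]

lemma dd_conj_zpow (a b : Fin m) (k : ℤ) :
    pperm G a * (dd G a b) ^ k * pperm G a = (dd G a b) ^ (-k) := by
  have h : pperm G a * (dd G a b) ^ k * (pperm G a)⁻¹ = ((dd G a b)⁻¹) ^ k := by
    have := map_zpow (MulAut.conj (pperm G a)) (dd G a b) k
    rw [MulAut.conj_apply, MulAut.conj_apply] at this
    rw [this, dd_conj]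
  rw [inv_zpow, ← zpow_neg] at h
  rw [← h, pperm_inv]

lemma pperm_dd_zpow (a b : Fin m) (k : ℤ) (x : G.V) :
    pperm G a ((dd G a b ^ k) x) = (dd G a b ^ (-k)) (pperm G a x) := by
  have h : pperm G a * (dd G a b) ^ k = (dd G a b) ^ (-k) * pperm G a := by
    have := dd_conj_zpow G a b k
    calc pperm G a * (dd G a b) ^ k
        = (pperm G a * (dd G a b) ^ k * pperm G a) * pperm G a := by
          rw [mul_assoc, pperm_mul_self, mul_one]
      _ = (dd G a b) ^ (-k) * pperm G a := by rw [this]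
  calc pperm G a ((dd G a b ^ k) x) = (pperm G a * (dd G a b) ^ k) x := rfl
    _ = ((dd G a b) ^ (-k) * pperm G a) x := by rw [h]
    _ = (dd G a b ^ (-k)) (pperm G a x) := rfl

lemma reach_pperm {a b c : Fin m} (hc : c = a ∨ c = b) (v : G.V) :
    G.Reach {a, b} v (pperm G c v) := by
  obtain ⟨e, hce, hends⟩ := pperm_partner G c v
  refine Relation.EqvGen.rel _ _ ⟨e, ?_, ?_, ?_⟩
  · rw [hce]
    rcases hc with h | h
    · exact h ▸ Set.mem_insert a {b}
    · exact h ▸ Set.mem_insert_of_mem a rfl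
  · rw [hends]; exact Sym2.mem_mk_left _ _
  · rw [hends]; exact Sym2.mem_mk_right _ _

lemma reach_dd (a b : Fin m) (v : G.V) : G.Reach {a, b} v (dd G a b v) := by
  have h1 := reach_pperm G (Or.inr rfl : b = a ∨ b = b) v
  have h2 := reach_pperm G (Or.inl rfl : a = a ∨ a = b) (pperm G b v)
  exact Relation.EqvGen.trans _ _ _ h1 h2

lemma reach_dd_inv (a b : Fin m) (v : G.V) : G.Reach {a, b} v ((dd G a b)⁻¹ v) := by
  have h1 := reach_pperm G (Or.inl rfl : a = a ∨ a = b) v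
  have h2 := reach_pperm G (Or.inr rfl : b = a ∨ b = b) (pperm G a v)
  have h3 : (dd G a b)⁻¹ v = pperm G b (pperm G a v) := by rw [dd_inv]; rfl
  rw [h3]
  exact Relation.EqvGen.trans _ _ _ h1 h2

lemma reach_dd_zpow (a b : Fin m) (k : ℤ) (v : G.V) :
    G.Reach {a, b} v ((dd G a b ^ k) v) := by
  induction k using Int.induction_on generalizing v with
  | zero => simp only [zpow_zero, Equiv.Perm.one_apply]; exact Relation.EqvGen.refl v
  | succ i ih =>
    have h1 : (dd G a b ^ ((i : ℤ) + 1)) v = (dd G a b ^ (i : ℤ)) (dd G a b v) := by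
      rw [zpow_add_one]
      rfl
    rw [h1]
    exact Relation.EqvGen.trans _ _ _ (reach_dd G a b v) (ih (dd G a b v))
  | pred i ih =>
    have h1 : (dd G a b ^ (-(i : ℤ) - 1)) v = (dd G a b ^ (-(i : ℤ))) ((dd G a b)⁻¹ v) := by
      rw [zpow_sub_one]
      rfl
    rw [h1]
    exact Relation.EqvGen.trans _ _ _ (reach_dd_inv G a b v) (ih ((dd G a b)⁻¹ v))

lemma reach_iff (a b : Fin m) (v u : G.V) :
    G.Reach {a, b} v u ↔
      ∃ k : ℤ, u = (dd G a b ^ k) v ∨ u = (dd G a b ^ k) (pperm G a v) := by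
  constructor
  · intro h
    induction h with
    | rel x y hxy =>
      obtain ⟨e, hce, hx, hy⟩ := hxy
      rcases edge_other G hx hy with h | h
      · exact ⟨0, Or.inl (by simpa using h)⟩
      · rcases hce with hc | hc
        · -- color e = a
          rw [hc] at h
          exact ⟨0, Or.inr (by simpa using h)⟩
        · -- color e = b
          rw [Set.mem_singleton_iff] at hc
          rw [hc] at h
          refine ⟨-1, Or.inr ?_⟩
          rw [h, zpow_neg_one, dd_inv]
          show pperm G b x = pperm G b (pperm G a (pperm G a x))
          rw [pperm_invol_apply]
    | refl x => exact ⟨0, Or.inl (by simp)⟩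
    | symm x y hxy ih =>
      obtain ⟨k, hk | hk⟩ := ih
      · refine ⟨-k, Or.inl ?_⟩
        rw [hk, ← Equiv.Perm.mul_apply, ← zpow_add]
        simp
      · refine ⟨k, Or.inr ?_⟩
        rw [hk, pperm_dd_zpow, ← Equiv.Perm.mul_apply, ← zpow_add, pperm_invol_apply]
        simp
    | trans x y z hxy hyz ih1 ih2 =>
      obtain ⟨k, hk | hk⟩ := ih1 <;> obtain ⟨l, hl | hl⟩ := ih2
      · exact ⟨l + k, Or.inl (by rw [hl, hk, ← Equiv.Perm.mul_apply, ← zpow_add])⟩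
      · refine ⟨l + -k, Or.inr ?_⟩
        rw [hl, hk, pperm_dd_zpow, ← Equiv.Perm.mul_apply, ← zpow_add]
      · exact ⟨l + k, Or.inr (by rw [hl, hk, ← Equiv.Perm.mul_apply, ← zpow_add])⟩
      · refine ⟨l + -k, Or.inl ?_⟩
        rw [hl, hk, pperm_dd_zpow, ← Equiv.Perm.mul_apply, ← zpow_add, pperm_invol_apply]
  · rintro ⟨k, hk | hk⟩
    · rw [hk]
      exact reach_dd_zpow G a b k v
    · rw [hk]
      exact Relation.EqvGen.trans _ _ _ (reach_pperm G (Or.inl rfl) v)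
        (reach_dd_zpow G a b k (pperm G a v))

end CGAux

namespace CGAux

open ColoredGraph

lemma bool_flip : ∀ {x y : Bool}, x ≠ y → x = !y := by decide

lemma f_invariant_zpow {V : Type*} (g : Equiv.Perm V) (f : V → Bool)
    (h : ∀ x, f (g x) = f x) : ∀ (k : ℤ) (x : V), f ((g ^ k) x) = f x := by
  have hinv : ∀ x, f (g⁻¹ x) = f x := fun x => by
    rw [← h (g⁻¹ x), ← Equiv.Perm.mul_apply, mul_inv_cancel, Equiv.Perm.one_apply]
  intro k
  induction k using Int.induction_on with
  | zero => intro x; simp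
  | succ i ih =>
    intro x
    have h2 : (g ^ ((i : ℤ) + 1)) x = (g ^ (i : ℤ)) (g x) := by rw [zpow_add_one]; rfl
    rw [h2, ih, h]
  | pred i ih =>
    intro x
    have h2 : (g ^ (-(i : ℤ) - 1)) x = (g ^ (-(i : ℤ))) (g⁻¹ x) := by rw [zpow_sub_one]; rfl
    rw [h2, ih, hinv]

lemma list_range_map_sum (k : ℕ) (F : ℕ → ℤ) :
    ((List.range k).map F).sum = ∑ i ∈ Finset.range k, F i := by
  induction k with
  | zero => simp
  | succ k ih =>
    rw [List.range_succ, List.map_append, List.sum_append, Finset.sum_range_succ, ih]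
    simp

variable {m : ℕ} (G : ColoredGraph m) (f : G.V → Bool)

/-- the black vertices -/
abbrev Bt := {v : G.V // f v = true}

/-- restriction of a two-color permutation to the black vertices -/
noncomputable def rho (a b : Fin m) (h : ∀ x, f (dd G a b x) = f x) :
    Equiv.Perm (Bt G f) :=
  (dd G a b).subtypePerm (fun x => by rw [h x])

lemma rho_val (a b : Fin m) (h : ∀ x, f (dd G a b x) = f x) (x : Bt G f) :
    ((rho G f a b h) x).val = dd G a b x.val := rfl

lemma rho_zpow_val (a b : Fin m) (h : ∀ x, f (dd G a b x) = f x) (k : ℤ) (x : Bt G f) :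
    ((rho G f a b h ^ k) x).val = (dd G a b ^ k) x.val := by
  rw [rho, Equiv.Perm.subtypePerm_zpow]
  rfl

lemma cyc_rho_eq_numResidues
    (hflip : ∀ (c : Fin m) (v : G.V), f (pperm G c v) ≠ f v) (a b : Fin m)
    (h : ∀ x, f (dd G a b x) = f x) :
    cyc (rho G f a b h) = G.numResidues {a, b} := by
  classical
  set σ := rho G f a b h with hσ
  have hDf : ∀ (k : ℤ) (x : G.V), f ((dd G a b ^ k) x) = f x :=
    f_invariant_zpow (dd G a b) f h
  have wd : ∀ (x y : Bt G f), (scSetoid σ).r x y →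
      (⟦x.val⟧ : Quotient (G.residueSetoid {a, b})) = ⟦y.val⟧ := by
    rintro x y ⟨k, hk⟩
    apply Quotient.sound
    show G.Reach {a, b} x.val y.val
    rw [← hk, rho_zpow_val]
    exact reach_dd_zpow G a b k x.val
  let F : Quotient (scSetoid σ) → Quotient (G.residueSetoid {a, b}) :=
    Quotient.lift (fun x : Bt G f => (⟦x.val⟧ : Quotient (G.residueSetoid {a, b}))) wd
  have hsurj : Function.Surjective F := by
    intro q
    induction q using Quotient.ind with
    | _ v =>
      by_cases hv : f v = true
      · exact ⟨⟦⟨v, hv⟩⟧, rfl⟩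
      · have hfv : f v = false := by revert hv; cases f v <;> simp
        have hv' : f (pperm G a v) = true := by
          have h2 := hflip a v
          rw [hfv] at h2
          revert h2; cases f (pperm G a v) <;> simp
        refine ⟨⟦⟨pperm G a v, hv'⟩⟧, ?_⟩
        show (⟦pperm G a v⟧ : Quotient (G.residueSetoid {a, b})) = ⟦v⟧
        apply Quotient.sound
        show G.Reach {a, b} (pperm G a v) v
        exact Relation.EqvGen.symm _ _ (reach_pperm G (Or.inl rfl) v)
  have hinj : Function.Injective F := by
    intro q q'
    induction q using Quotient.ind with
    | _ x =>
      induction q' using Quotient.ind with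
      | _ y =>
        intro hFeq
        have hreach : G.Reach {a, b} x.val y.val := Quotient.exact hFeq
        rw [reach_iff] at hreach
        obtain ⟨k, hk | hk⟩ := hreach
        · apply Quotient.sound
          show σ.SameCycle x y
          exact ⟨k, Subtype.ext (by rw [rho_zpow_val]; exact hk.symm)⟩
        · exfalso
          have h1 : f y.val = true := y.prop
          rw [hk, hDf] at h1
          exact hflip a x.val (h1.trans x.prop.symm)
  rw [ColoredGraph.numResidues]
  exact Nat.card_eq_of_bijective F ⟨hinj, hsurj⟩

end CGAux

namespace CGAux

open ColoredGraph

theorem aux (m : ℕ) [NeZero m] (G : ColoredGraph m) (f : G.V → Bool)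
    (hf : ∀ e : G.E, ∀ v ∈ G.ends e, ∀ w ∈ G.ends e, v ≠ w → f v ≠ f w)
    (p : ℕ) (hp : Fintype.card G.V = 2 * p) (hppos : 0 < p)
    (ε : ZMod m → Fin m) (hε : Function.Bijective ε) :
    ∃ ρ : ℕ, (∑ j : ZMod m, (G.numResidues {ε j, ε (j + 1)} : ℤ)) + (2 - (m : ℤ)) * p
      = 2 - 2 * (ρ : ℤ) := by
  classical
  have hflip : ∀ (c : Fin m) (v : G.V), f (pperm G c v) ≠ f v := by
    intro c v
    obtain ⟨e, hc, he⟩ := pperm_partner G c v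
    have h1 : v ∈ G.ends e := he ▸ Sym2.mem_mk_left _ _
    have h2 : pperm G c v ∈ G.ends e := he ▸ Sym2.mem_mk_right _ _
    exact Ne.symm (hf e v h1 (pperm G c v) h2 (Ne.symm (pperm_ne G c v)))
  have hddeq : ∀ (c d : Fin m) (x : G.V), f (dd G c d x) = f x := by
    intro c d x
    have h1 := hflip d x
    have h2 := hflip c (pperm G d x)
    show f (pperm G c (pperm G d x)) = f x
    revert h1 h2
    cases f x <;> cases f (pperm G d x) <;> cases f (pperm G c (pperm G d x)) <;> simp
  have hdds : ∀ (c : Fin m) (z : G.V), dd G c c z = z := fun c z => pperm_invol_apply G c z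
  have heqdd : ∀ (c d e' : Fin m), dd G c d * dd G d e' = dd G c e' := by
    intro c d e'
    rw [dd, dd, dd, mul_assoc, ← mul_assoc (pperm G d) (pperm G d), pperm_mul_self, one_mul]
  -- cardinality of the black part
  have hcardB : Fintype.card (Bt G f) = p := by
    let c0 : Fin m := ⟨0, Nat.pos_of_ne_zero (NeZero.ne m)⟩
    have hmapt : ∀ v : G.V, f v = true → f (pperm G c0 v) = false := fun v hv => by
      have h2 := hflip c0 v; rw [hv] at h2; revert h2; cases f (pperm G c0 v) <;> simp
    have hmapf : ∀ v : G.V, f v = false → f (pperm G c0 v) = true := fun v hv => by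
      have h2 := hflip c0 v; rw [hv] at h2; revert h2; cases f (pperm G c0 v) <;> simp
    let E : Bt G f ≃ {v : G.V // ¬ (f v = true)} :=
      { toFun := fun x => ⟨pperm G c0 x.val, by rw [hmapt x.val x.prop]; simp⟩
        invFun := fun x => ⟨pperm G c0 x.val, hmapf x.val (by
          have h2 := x.prop; revert h2; cases f x.val <;> simp)⟩
        left_inv := fun x => Subtype.ext (pperm_invol_apply G c0 x.val)
        right_inv := fun x => Subtype.ext (pperm_invol_apply G c0 x.val) }
    have h1 : Fintype.card {v : G.V // ¬ (f v = true)}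
        = Fintype.card G.V - Fintype.card (Bt G f) := Fintype.card_subtype_compl _
    have h2 : Fintype.card (Bt G f) = Fintype.card {v : G.V // ¬ (f v = true)} :=
      Fintype.card_congr E
    have h3 : Fintype.card (Bt G f) ≤ Fintype.card G.V := Fintype.card_subtype_le _
    omega
  -- the permutations
  set ρfun : ZMod m → Equiv.Perm (Bt G f) :=
    fun j => rho G f (ε j) (ε (j + 1)) (hddeq (ε j) (ε (j + 1))) with hρdef
  set L : List (Equiv.Perm (Bt G f)) := (List.range m).map (fun i : ℕ => ρfun ((i : ZMod m)))
    with hLdef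
  have hρmem : ∀ j : ZMod m, ρfun j ∈ {g | g ∈ L} := by
    intro j
    show ρfun j ∈ L
    rw [hLdef]
    refine List.mem_map.mpr ⟨j.val, List.mem_range.mpr (ZMod.val_lt j), ?_⟩
    rw [ZMod.natCast_rightInverse j]
  -- telescoping membership
  have htelB : ∀ (j : ZMod m) (mm : ℕ), ∃ h ∈ Subgroup.closure {g | g ∈ L},
      ∀ x : Bt G f, (h x).val = dd G (ε j) (ε (j + (mm : ZMod m))) x.val := by
    intro j mm
    induction mm with
    | zero =>
      refine ⟨1, one_mem _, fun x => ?_⟩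
      rw [Nat.cast_zero, add_zero, hdds]
      rfl
    | succ mm ih =>
      obtain ⟨h, hh, hval⟩ := ih
      refine ⟨h * ρfun (j + (mm : ZMod m)),
        mul_mem hh (Subgroup.subset_closure (hρmem _)), fun x => ?_⟩
      have hx : ((h * ρfun (j + (mm : ZMod m))) x).val
          = dd G (ε j) (ε (j + (mm : ZMod m))) ((ρfun (j + (mm : ZMod m)) x).val) := by
        rw [Equiv.Perm.mul_apply]
        exact hval _
      rw [hx, hρdef]
      rw [rho_val]
      rw [← Equiv.Perm.mul_apply (dd G (ε j) (ε (j + (mm : ZMod m)))), heqdd]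
      have hcast : j + ((mm + 1 : ℕ) : ZMod m) = j + (mm : ZMod m) + 1 := by
        push_cast
        ring
      rw [hcast]
  -- all pairs
  have hpair : ∀ c d : Fin m, ∃ h ∈ Subgroup.closure {g | g ∈ L},
      ∀ x : Bt G f, (h x).val = dd G c d x.val := by
    intro c d
    obtain ⟨j, rfl⟩ := hε.surjective c
    obtain ⟨l, rfl⟩ := hε.surjective d
    obtain ⟨h, hh, hval⟩ := htelB j ((l - j).val)
    have hcast : j + (((l - j).val : ℕ) : ZMod m) = l := by
      rw [ZMod.natCast_rightInverse (l - j)]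
      ring
    rw [hcast] at hval
    exact ⟨h, hh, hval⟩
  -- path claim
  have hstepclaim : ∀ v u : G.V,
      Relation.ReflTransGen (fun a b => ∃ e : G.E, a ∈ G.ends e ∧ b ∈ G.ends e) v u →
      ∀ hv : f v = true, ∃ h ∈ Subgroup.closure {g | g ∈ L},
        ((∃ _ : f u = true, (h ⟨v, hv⟩).val = u)
          ∨ (f u = false ∧ ∃ c : Fin m, (h ⟨v, hv⟩).val = pperm G c u)) := by
    intro v u hpath
    induction hpath with
    | refl => intro hv; exact ⟨1, one_mem _, Or.inl ⟨hv, rfl⟩⟩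
    | @tail u' u hpath' hstep ih =>
      intro hv
      obtain ⟨h, hh, hcase⟩ := ih hv
      obtain ⟨e, hu'e, hue⟩ := hstep
      rcases edge_other G hu'e hue with hequ | hequ
      · rw [hequ]
        exact ⟨h, hh, hcase⟩
      · rcases hcase with ⟨hu', hval⟩ | ⟨hu'false, c, hval⟩
        · have hufalse : f u = false := by
            rw [hequ]
            have h2 := hflip (G.color e) u'
            rw [hu'] at h2
            revert h2; cases f (pperm G (G.color e) u') <;> simp
          refine ⟨h, hh, Or.inr ⟨hufalse, G.color e, ?_⟩⟩
          rw [hequ, pperm_invol_apply]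
          exact hval
        · have hutrue : f u = true := by
            rw [hequ]
            have h2 := hflip (G.color e) u'
            rw [hu'false] at h2
            revert h2; cases f (pperm G (G.color e) u') <;> simp
          obtain ⟨g, hg, hgval⟩ := hpair (G.color e) c
          refine ⟨g * h, mul_mem hg hh, Or.inl ⟨hutrue, ?_⟩⟩
          have hgh : ((g * h) ⟨v, hv⟩).val = dd G (G.color e) c ((h ⟨v, hv⟩).val) := by
            rw [Equiv.Perm.mul_apply]
            exact hgval _
          rw [hgh, hval]
          show pperm G (G.color e) (pperm G c (pperm G c u')) = u
          rw [pperm_invol_apply]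
          exact hequ.symm
  -- transitivity
  have htrans : ∀ x y : Bt G f, (orbSetoid (Subgroup.closure {g | g ∈ L})).r x y := by
    intro x y
    obtain ⟨h, hh, hcase⟩ := hstepclaim x.val y.val (G.connected x.val y.val) x.prop
    rcases hcase with ⟨hu, hval⟩ | ⟨hfalse, -⟩
    · exact ⟨h, hh, Subtype.ext hval⟩
    · rw [y.prop] at hfalse
      exact absurd hfalse (by simp)
  -- product
  have htelprod : ∀ (mm : ℕ) (x : Bt G f),
      ((((List.range mm).map (fun i : ℕ => ρfun ((i : ZMod m)))).prod) x).val
        = dd G (ε 0) (ε ((mm : ℕ) : ZMod m)) x.val := by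
    intro mm
    induction mm with
    | zero =>
      intro x
      rw [Nat.cast_zero, hdds]
      simp
    | succ mm ih =>
      intro x
      rw [List.range_succ, List.map_append, List.prod_append]
      simp only [List.map_cons, List.map_nil, List.prod_cons, List.prod_nil, mul_one]
      rw [Equiv.Perm.mul_apply]
      rw [ih (ρfun ((mm : ZMod m)) x)]
      have hrv : ((ρfun ((mm : ZMod m))) x).val
          = dd G (ε ((mm : ZMod m))) (ε ((mm : ZMod m) + 1)) x.val := by
        rw [hρdef]; rfl
      rw [hrv, ← Equiv.Perm.mul_apply (dd G (ε 0) (ε ((mm : ZMod m)))), heqdd]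
      have hcast : (((mm + 1 : ℕ)) : ZMod m) = ((mm : ℕ) : ZMod m) + 1 := by push_cast; ring
      rw [hcast]
  have hprodL : L.prod = 1 := by
    apply Equiv.ext
    intro x
    have h2 := htelprod m x
    rw [ZMod.natCast_self, hdds] at h2
    rw [hLdef]
    exact Subtype.ext h2
  -- apply the constellation theorem
  have hpos : 0 < Fintype.card (Bt G f) := by rw [hcardB]; exact hppos
  obtain ⟨ρ₀, hρ₀⟩ := constellation L hprodL htrans hpos
  refine ⟨ρ₀, ?_⟩
  have hlen : L.length = m := by rw [hLdef, List.length_map, List.length_range]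
  have hres : ∀ j : ZMod m, (G.numResidues {ε j, ε (j + 1)} : ℤ) = (cyc (ρfun j) : ℤ) := by
    intro j
    rw [← cyc_rho_eq_numResidues G f hflip (ε j) (ε (j + 1)) (hddeq (ε j) (ε (j + 1)))]
  have hsum1 : (L.map fun g => (cyc g : ℤ)).sum
      = ∑ i ∈ Finset.range m, (cyc (ρfun ((i : ZMod m))) : ℤ) := by
    rw [hLdef, List.map_map]
    exact list_range_map_sum m _
  have hsum2 : ∑ j : ZMod m, (cyc (ρfun j) : ℤ)
      = ∑ i ∈ Finset.range m, (cyc (ρfun ((i : ZMod m))) : ℤ) := by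
    refine Finset.sum_nbij' (fun j => ZMod.val j) (fun i => ((i : ZMod m))) ?_ ?_ ?_ ?_ ?_
    · intro a _; exact Finset.mem_range.mpr (ZMod.val_lt a)
    · intro b _; exact Finset.mem_univ _
    · intro a _; exact ZMod.natCast_rightInverse a
    · intro b hb; exact ZMod.val_cast_of_lt (Finset.mem_range.mp hb)
    · intro a _
      rw [ZMod.natCast_rightInverse a]
  calc (∑ j : ZMod m, (G.numResidues {ε j, ε (j + 1)} : ℤ)) + (2 - (m : ℤ)) * p
      = (∑ j : ZMod m, (cyc (ρfun j) : ℤ)) + (2 - (m : ℤ)) * p := by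
        rw [Finset.sum_congr rfl (fun j _ => hres j)]
    _ = (L.map fun g => (cyc g : ℤ)).sum + (2 - (L.length : ℤ)) * (Fintype.card (Bt G f)) := by
        rw [hsum1, hsum2, hlen, hcardB]
    _ = 2 - 2 * (ρ₀ : ℤ) := hρ₀

end CGAux

/-- for a bipartite (n+1)-colored graph of order 2p and a cyclic
permutation ε of the colors, the quantity Σ_j g_{ε_j,ε_{j+1}} + (1−n)p equals
2 − 2ρ for some nonnegative integer ρ (the genus of the regular embedding surface);
in particular it is an even integer at most 2. -/
theorem regular_genus_exists (n : ℕ) (G : ColoredGraph (n + 1)) (p : ℕ)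
    (hp : Fintype.card G.V = 2 * p) (hbip : G.Bipartite)
    (ε : ZMod (n + 1) → Fin (n + 1)) (hε : Function.Bijective ε) :
    ∃ ρ : ℕ,
      (∑ j : ZMod (n + 1), (G.numResidues {ε j, ε (j + 1)} : ℤ)) + (1 - (n : ℤ)) * p
        = 2 - 2 * (ρ : ℤ) := by
  classical
  rcases Nat.eq_zero_or_pos p with hp0 | hppos
  · subst hp0
    have hV : Fintype.card G.V = 0 := by simpa using hp
    have hVe : IsEmpty G.V := Fintype.card_eq_zero_iff.mp hV
    refine ⟨1, ?_⟩
    have hzero : ∀ j : ZMod (n + 1), G.numResidues {ε j, ε (j + 1)} = 0 := by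
      intro j
      rw [ColoredGraph.numResidues]
      haveI : IsEmpty (Quotient (G.residueSetoid {ε j, ε (j + 1)})) := by
        constructor
        intro q
        induction q using Quotient.ind with
        | _ v => exact hVe.false v
      simp [Nat.card_of_isEmpty]
    have hs : (∑ j : ZMod (n + 1), (G.numResidues {ε j, ε (j + 1)} : ℤ)) = 0 := by
      apply Finset.sum_eq_zero
      intro j _
      rw [hzero j]
      rfl
    rw [hs]
    norm_num
  · obtain ⟨f, hf⟩ := hbip
    obtain ⟨ρ, hρ⟩ := CGAux.aux (n + 1) G f hf p hp hppos ε hε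
    refine ⟨ρ, ?_⟩
    have hc : (2 - ((n + 1 : ℕ) : ℤ)) = 1 - (n : ℤ) := by push_cast; ring
    rw [hc] at hρ
    exact hρ
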